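/- arXiv:1512.02861 — 6 statements merged into one kernel-verified Lean document; each statement's English description precedes it below -/
import Mathlib

section
/- Skorokhod's lemma: Let b : [0,∞) → ℝ be a continuous function with b(0) = 0 and let x₀ ≥ 0. Then there exists a unique pair of continuous functions x, l : [0,∞) → ℝ such that (i) x(0) = x₀ and x(t) ≥ 0 for all t ≥ 0; (ii) l is non-decreasing with l(0) = 0; (iii) l increases only where x = 0, i.e. l is constant on every interval on which x is strictly positive (for all t₁ ≤ t₂, if x(u) > 0 for all u ∈ [t₁,t₂] then l(t₁) = l(t₂)); (iv) x(t) = x₀ + l(t) + b(t) for all t ≥ 0. Moreover the solution is given explicitly by l(t) = max(0, −m(t) − x₀) and x(t) = x₀ + b(t) + max(0, −m(t) − x₀), where m(t) = min_{0 ≤ t' ≤ t} b(t'). -/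
open Set

/-- A pair `(x, l)` of functions on `[0, ∞)` satisfying the conditions of Skorokhod's lemma
for the continuous function `b` (with `b 0 = 0`) and initial condition `x₀ ≥ 0`:
(i) `x 0 = x₀` and `x t ≥ 0` for all `t ≥ 0`;
(ii) `l` is non-decreasing on `[0, ∞)` with `l 0 = 0`;
(iii) `l` increases only where `x = 0`, i.e. `l` is constant on every interval
on which `x` is strictly positive;
(iv) `x t = x₀ + l t + b t` for all `t ≥ 0`;
both `x` and `l` being continuous on `[0, ∞)`. -/
def SkorokhodPair (b : ℝ → ℝ) (x₀ : ℝ) (x l : ℝ → ℝ) : Prop :=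
  ContinuousOn x (Ici 0) ∧ ContinuousOn l (Ici 0) ∧
  x 0 = x₀ ∧ (∀ t, 0 ≤ t → 0 ≤ x t) ∧
  l 0 = 0 ∧ (∀ t₁ t₂, 0 ≤ t₁ → t₁ ≤ t₂ → l t₁ ≤ l t₂) ∧
  (∀ t₁ t₂, 0 ≤ t₁ → t₁ ≤ t₂ → (∀ u, t₁ ≤ u → u ≤ t₂ → 0 < x u) → l t₁ = l t₂) ∧
  (∀ t, 0 ≤ t → x t = x₀ + l t + b t)

variable {b : ℝ → ℝ}

noncomputable def skm (b : ℝ → ℝ) (t : ℝ) : ℝ := sInf (b '' Icc 0 t)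

lemma skm_ne {t : ℝ} (ht : 0 ≤ t) : (b '' Icc 0 t).Nonempty :=
  ⟨b 0, 0, ⟨le_refl 0, ht⟩, rfl⟩

lemma skm_bdd (hb : ContinuousOn b (Ici 0)) {t : ℝ} (_ht : 0 ≤ t) :
    BddBelow (b '' Icc 0 t) :=
  (isCompact_Icc.image_of_continuousOn (hb.mono Icc_subset_Ici_self)).bddBelow

lemma skm_le (hb : ContinuousOn b (Ici 0)) {t s : ℝ} (ht : 0 ≤ t) (hs : s ∈ Icc 0 t) :
    skm b t ≤ b s := csInf_le (skm_bdd hb ht) ⟨s, hs, rfl⟩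

lemma le_skm {c t : ℝ} (ht : 0 ≤ t) (h : ∀ s ∈ Icc 0 t, c ≤ b s) : c ≤ skm b t :=
  le_csInf (skm_ne ht) (by rintro _ ⟨s, hs, rfl⟩; exact h s hs)

lemma skm_anti (hb : ContinuousOn b (Ici 0)) {t₁ t₂ : ℝ} (h1 : 0 ≤ t₁) (h : t₁ ≤ t₂) :
    skm b t₂ ≤ skm b t₁ :=
  csInf_le_csInf (skm_bdd hb (h1.trans h)) (skm_ne h1)
    (image_mono (Icc_subset_Icc le_rfl h))

lemma skm_attained (hb : ContinuousOn b (Ici 0)) {t : ℝ} (ht : 0 ≤ t) :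
    ∃ s ∈ Icc 0 t, b s = skm b t := by
  obtain ⟨s, hs, hmin⟩ := isCompact_Icc.exists_isMinOn ⟨0, left_mem_Icc.2 ht⟩
    (hb.mono Icc_subset_Ici_self)
  exact ⟨s, hs, le_antisymm (le_skm ht fun u hu => hmin hu) (skm_le hb ht hs)⟩

lemma skm_cont (hb : ContinuousOn b (Ici 0)) : ContinuousOn (skm b) (Ici 0) := by
  intro t₀ ht₀
  rw [Metric.continuousWithinAt_iff]
  intro ε hε
  obtain ⟨δ, hδ, hδb⟩ := Metric.continuousWithinAt_iff.1 (hb t₀ ht₀) (ε/3) (by linarith)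
  refine ⟨δ, hδ, fun t ht hdist => ?_⟩
  have ht' : (0:ℝ) ≤ t := ht
  have ht₀' : (0:ℝ) ≤ t₀ := ht₀
  have hb0 : skm b t₀ ≤ b t₀ := skm_le hb ht₀' ⟨ht₀', le_rfl⟩
  have key : skm b t₀ - 2*(ε/3) ≤ skm b t ∧ skm b t ≤ skm b t₀ + 2*(ε/3) := by
    rcases le_total t₀ t with hle | hle
    · constructor
      · refine le_skm ht' fun s hs => ?_
        rcases le_total s t₀ with h | h
        · have := skm_le hb ht₀' ⟨hs.1, h⟩; linarith
        · have hsd : dist s t₀ < δ := by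
            rw [Real.dist_eq] at hdist ⊢
            have : |s - t₀| ≤ |t - t₀| := by
              rw [abs_of_nonneg (by linarith), abs_of_nonneg (by linarith)]
              linarith [hs.2]
            linarith
          have := hδb (show s ∈ Ici (0:ℝ) from hs.1) hsd
          rw [Real.dist_eq, abs_lt] at this
          linarith
      · have := skm_anti hb ht₀' hle; linarith
    · constructor
      · have := skm_anti hb ht' hle; linarith
      · obtain ⟨s, hs, hbs⟩ := skm_attained hb ht₀'
        rcases le_total s t with h | h
        · have := skm_le hb ht' ⟨hs.1, h⟩; linarith
        · have hsd : dist s t₀ < δ := by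
            rw [Real.dist_eq] at hdist ⊢
            have : |s - t₀| ≤ |t - t₀| := by
              rw [abs_of_nonpos (by linarith [hs.2]), abs_of_nonpos (by linarith)]
              linarith
            linarith
          have h1 := hδb (show s ∈ Ici (0:ℝ) from hs.1) hsd
          have h2 := hδb (show t ∈ Ici (0:ℝ) from ht') hdist
          rw [Real.dist_eq, abs_lt] at h1 h2
          have h3 : skm b t ≤ b t := skm_le hb ht' ⟨ht', le_rfl⟩
          linarith
  rw [Real.dist_eq, abs_lt]
  constructor <;> [linarith [key.2]; linarith [key.1]]

lemma skm_zero (hb0 : b 0 = 0) : skm b 0 = 0 := by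
  simp [skm, Icc_self, hb0]

lemma skorokhod_exists (hb : ContinuousOn b (Ici 0)) (hb0 : b 0 = 0)
    (x₀ : ℝ) (hx₀ : 0 ≤ x₀) :
    SkorokhodPair b x₀ (fun t => x₀ + b t + max 0 (-skm b t - x₀))
      (fun t => max 0 (-skm b t - x₀)) := by
  have hlc : ContinuousOn (fun t => max 0 (-skm b t - x₀)) (Ici 0) :=
    continuousOn_const.sup (((skm_cont hb).neg).sub continuousOn_const)
  have hl0 : max 0 (-skm b 0 - x₀) = 0 := by
    rw [skm_zero hb0]; exact max_eq_left (by linarith)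
  refine ⟨(continuousOn_const.add hb).add hlc, hlc, ?_, ?_, hl0, ?_, ?_, ?_⟩
  · simp only [hl0, hb0, add_zero]
  · intro t ht
    have h1 : -skm b t - x₀ ≤ max 0 (-skm b t - x₀) := le_max_right _ _
    have h2 : skm b t ≤ b t := skm_le hb ht ⟨ht, le_rfl⟩
    simp only; linarith
  · intro t₁ t₂ h1 h2
    exact max_le_max le_rfl (by have := skm_anti hb h1 h2; linarith)
  · intro t₁ t₂ h1 h2 hpos
    simp only
    by_contra hne
    have hmono : max 0 (-skm b t₁ - x₀) ≤ max 0 (-skm b t₂ - x₀) :=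
      max_le_max le_rfl (by have := skm_anti hb h1 h2; linarith)
    have hlt : max 0 (-skm b t₁ - x₀) < max 0 (-skm b t₂ - x₀) := lt_of_le_of_ne hmono hne
    have hpos2 : 0 < -skm b t₂ - x₀ := by
      by_contra hc
      push_neg at hc
      rw [max_eq_left hc] at hlt
      exact absurd hlt (not_lt.2 (le_max_left _ _))
    have heq2 : max 0 (-skm b t₂ - x₀) = -skm b t₂ - x₀ := max_eq_right hpos2.le
    have hmlt : skm b t₂ < skm b t₁ := by
      have h3 : -skm b t₁ - x₀ ≤ max 0 (-skm b t₁ - x₀) := le_max_right _ _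
      rw [heq2] at hlt; linarith
    obtain ⟨s, hs, hbs⟩ := skm_attained hb (h1.trans h2)
    have hs1 : t₁ < s := by
      by_contra hc
      push_neg at hc
      have := skm_le hb h1 ⟨hs.1, hc⟩
      rw [hbs] at this; linarith
    have hskm : skm b s = skm b t₂ := by
      have ha := skm_anti hb hs.1 hs.2
      have hc : skm b s ≤ b s := skm_le hb hs.1 ⟨hs.1, le_rfl⟩
      rw [hbs] at hc; linarith
    have hxs : 0 < x₀ + b s + max 0 (-skm b s - x₀) := hpos s hs1.le hs.2
    rw [hskm, heq2] at hxs
    have : b s = skm b t₂ := hbs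
    linarith
  · intro t ht; ring

lemma skorokhod_unique_aux {x₀ : ℝ} {x₁ l₁ x₂ l₂ : ℝ → ℝ}
    (P₁ : SkorokhodPair b x₀ x₁ l₁) (P₂ : SkorokhodPair b x₀ x₂ l₂) :
    ∀ t, 0 ≤ t → l₂ t ≤ l₁ t := by
  obtain ⟨hx₁c, hl₁c, hx₁0, hx₁nn, hl₁0, hl₁mono, hl₁flat, hx₁eq⟩ := P₁
  obtain ⟨hx₂c, hl₂c, hx₂0, hx₂nn, hl₂0, hl₂mono, hl₂flat, hx₂eq⟩ := P₂
  intro t ht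
  by_contra hc
  push_neg at hc
  set S : Set ℝ := {u | u ∈ Icc 0 t ∧ l₂ u ≤ l₁ u} with hS
  have h0S : (0:ℝ) ∈ S := ⟨⟨le_rfl, ht⟩, by rw [hl₁0, hl₂0]⟩
  have hSne : S.Nonempty := ⟨0, h0S⟩
  have hSbdd : BddAbove S := ⟨t, fun u hu => hu.1.2⟩
  set s := sSup S with hs
  have hs0 : 0 ≤ s := le_csSup hSbdd h0S
  have hst : s ≤ t := csSup_le hSne fun u hu => hu.1.2
  have hSsub : S ⊆ Ici (0:ℝ) := fun u hu => hu.1.1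
  -- l₂ s ≤ l₁ s by continuity
  have hscl : s ∈ closure S := (isLUB_csSup hSne hSbdd).mem_closure hSne
  have hnb : (nhdsWithin s S).NeBot := mem_closure_iff_nhdsWithin_neBot.1 hscl
  have hls : l₂ s ≤ l₁ s := by
    have htend : Filter.Tendsto (fun u => l₂ u - l₁ u) (nhdsWithin s S)
        (nhds (l₂ s - l₁ s)) :=
      (((hl₂c s hs0).mono hSsub).sub ((hl₁c s hs0).mono hSsub))
    have hev : ∀ᶠ u in nhdsWithin s S, l₂ u - l₁ u ≤ 0 := by
      filter_upwards [self_mem_nhdsWithin] with u hu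
      linarith [hu.2]
    have := le_of_tendsto htend hev
    linarith
  have hsne : s ≠ t := fun h => by rw [h] at hls; exact absurd hls (not_le.2 hc)
  have hslt : s < t := lt_of_le_of_ne hst hsne
  -- on (s, t], l₁ u < l₂ u, hence x₂ u > 0
  have hxpos : ∀ u, s < u → u ≤ t → 0 < x₂ u := by
    intro u hu1 hu2
    have hu0 : 0 ≤ u := hs0.trans hu1.le
    have hnotin : u ∉ S := fun hmem => absurd (le_csSup hSbdd hmem) (not_le.2 hu1)
    have hlu : l₁ u < l₂ u := by
      by_contra hc2
      push_neg at hc2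
      exact hnotin ⟨⟨hu0, hu2⟩, hc2⟩
    have h1 := hx₁nn u hu0
    rw [hx₁eq u hu0] at h1
    rw [hx₂eq u hu0]
    linarith
  -- l₂ is constant on (s, t]
  have hl₂const : ∀ u, s < u → u ≤ t → l₂ u = l₂ t := by
    intro u hu1 hu2
    exact hl₂flat u t (hs0.trans hu1.le) hu2 fun v hv1 hv2 => hxpos v (hu1.trans_le hv1) hv2
  -- so l₂ s = l₂ t by continuity from the right
  have hIoc : Ioc s t ∈ nhdsWithin s (Ioi s) := by
    rw [mem_nhdsWithin]
    exact ⟨Iio t, isOpen_Iio, hslt, fun v hv => ⟨hv.2, le_of_lt hv.1⟩⟩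
  have htend2 : Filter.Tendsto l₂ (nhdsWithin s (Ioi s)) (nhds (l₂ s)) :=
    (hl₂c s hs0).mono_left
      (nhdsWithin_mono s (fun v (hv : v ∈ Ioi s) => hs0.trans (le_of_lt hv)))
  have hev2 : l₂ =ᶠ[nhdsWithin s (Ioi s)] fun _ => l₂ t := by
    filter_upwards [hIoc] with u hu
    exact hl₂const u hu.1 hu.2
  have h2 : Filter.Tendsto (fun _ : ℝ => l₂ t) (nhdsWithin s (Ioi s)) (nhds (l₂ s)) :=
    htend2.congr' hev2
  have hst2 : l₂ s = l₂ t := tendsto_nhds_unique h2 tendsto_const_nhds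
  have := hl₁mono s t hs0 hst
  linarith


/-- **Skorokhod's lemma**: for continuous `b` with `b 0 = 0` and `x₀ ≥ 0`, there is a
pair `(x, l)` satisfying the Skorokhod conditions, unique on `[0, ∞)`, and it is given
explicitly by `l t = max 0 (-m t - x₀)` and `x t = x₀ + b t + max 0 (-m t - x₀)`,
where `m t = min_{0 ≤ t' ≤ t} b t'`. -/
theorem skorokhod_lemma (b : ℝ → ℝ) (hb : ContinuousOn b (Ici 0)) (hb0 : b 0 = 0)
    (x₀ : ℝ) (hx₀ : 0 ≤ x₀) :
    (∃ x l : ℝ → ℝ, SkorokhodPair b x₀ x l ∧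
      (∀ t, 0 ≤ t → l t = max 0 (-(sInf (b '' Icc 0 t)) - x₀)) ∧
      (∀ t, 0 ≤ t → x t = x₀ + b t + max 0 (-(sInf (b '' Icc 0 t)) - x₀))) ∧
    (∀ x₁ l₁ x₂ l₂ : ℝ → ℝ, SkorokhodPair b x₀ x₁ l₁ → SkorokhodPair b x₀ x₂ l₂ →
      ∀ t, 0 ≤ t → x₁ t = x₂ t ∧ l₁ t = l₂ t) := by
  constructor
  · refine ⟨fun t => x₀ + b t + max 0 (-skm b t - x₀), fun t => max 0 (-skm b t - x₀),
      skorokhod_exists hb hb0 x₀ hx₀, fun t ht => rfl, fun t ht => rfl⟩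
  · intro x₁ l₁ x₂ l₂ P₁ P₂ t ht
    have h1 := skorokhod_unique_aux P₁ P₂ t ht
    have h2 := skorokhod_unique_aux P₂ P₁ t ht
    have hl : l₁ t = l₂ t := le_antisymm h2 h1
    exact ⟨by rw [P₁.2.2.2.2.2.2.2 t ht, P₂.2.2.2.2.2.2.2 t ht, hl], hl⟩
end

section
/- Existence part of Skorokhod's lemma: Let b : [0,∞) → ℝ be continuous with b(0) = 0, let x₀ ≥ 0, and set m(t) = min_{0 ≤ t' ≤ t} b(t'), l(t) = max(0, −m(t) − x₀), and x(t) = x₀ + b(t) + l(t). Then x and l are continuous, x(0) = x₀, x(t) ≥ 0 for all t ≥ 0, l(0) = 0, l is non-decreasing, l is constant on every interval on which x is strictly positive, and x(t) = x₀ + l(t) + b(t) for all t ≥ 0. -/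
open Set

/-- **Existence part of Skorokhod's lemma**: for `b` continuous on `[0, ∞)` with `b 0 = 0`
and `x₀ ≥ 0`, the functions `m t = min_{0 ≤ t' ≤ t} b t'`, `l t = max 0 (-m t - x₀)` and
`x t = x₀ + b t + l t` satisfy: `x` and `l` are continuous on `[0, ∞)`, `x 0 = x₀`,
`x t ≥ 0` for all `t ≥ 0`, `l 0 = 0`, `l` is non-decreasing on `[0, ∞)`, `l` is constant
on every interval on which `x` is strictly positive, and `x t = x₀ + l t + b t` for `t ≥ 0`. -/
theorem skorokhod_existence (b : ℝ → ℝ) (hb : ContinuousOn b (Ici 0)) (hb0 : b 0 = 0)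
    (x₀ : ℝ) (hx₀ : 0 ≤ x₀) (m l x : ℝ → ℝ)
    (hm : ∀ t, m t = sInf (b '' Icc 0 t))
    (hl : ∀ t, l t = max 0 (-(m t) - x₀))
    (hx : ∀ t, x t = x₀ + b t + l t) :
    ContinuousOn x (Ici 0) ∧ ContinuousOn l (Ici 0) ∧
    x 0 = x₀ ∧ (∀ t, 0 ≤ t → 0 ≤ x t) ∧
    l 0 = 0 ∧ (∀ t₁ t₂, 0 ≤ t₁ → t₁ ≤ t₂ → l t₁ ≤ l t₂) ∧
    (∀ t₁ t₂, 0 ≤ t₁ → t₁ ≤ t₂ → (∀ u, t₁ ≤ u → u ≤ t₂ → 0 < x u) → l t₁ = l t₂) ∧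
    (∀ t, 0 ≤ t → x t = x₀ + l t + b t) := by
  have hsub : ∀ t : ℝ, Icc (0:ℝ) t ⊆ Ici 0 := fun t => Icc_subset_Ici_self
  have hne : ∀ t : ℝ, 0 ≤ t → (b '' Icc 0 t).Nonempty := fun t ht =>
    (nonempty_Icc.2 ht).image b
  have hbdd : ∀ t : ℝ, 0 ≤ t → BddBelow (b '' Icc 0 t) := fun t _ =>
    (isCompact_Icc.image_of_continuousOn (hb.mono (hsub t))).bddBelow
  have hmle : ∀ t u : ℝ, u ∈ Icc 0 t → m t ≤ b u := by
    intro t u hu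
    rw [hm]
    exact csInf_le (hbdd t (hu.1.trans hu.2)) ⟨u, hu, rfl⟩
  have hlem : ∀ (t c : ℝ), 0 ≤ t → (∀ u ∈ Icc (0:ℝ) t, c ≤ b u) → c ≤ m t := by
    intro t c ht h
    rw [hm]
    exact le_csInf (hne t ht) (by rintro _ ⟨u, hu, rfl⟩; exact h u hu)
  have hanti : ∀ s t : ℝ, 0 ≤ s → s ≤ t → m t ≤ m s := by
    intro s t hs hst
    rw [hm, hm]
    exact csInf_le_csInf (hbdd t (hs.trans hst)) (hne s hs)
      (image_mono (f := b) (Icc_subset_Icc_right hst))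
  have hm0 : m 0 = 0 := by rw [hm]; simp [Icc_self, hb0]
  -- continuity of m on Ici 0
  have hmcont : ContinuousOn m (Ici 0) := by
    intro t₀ ht₀
    rw [Metric.continuousWithinAt_iff]
    intro ε hε
    obtain ⟨δ, hδ, hδ'⟩ := Metric.continuousWithinAt_iff.1 (hb t₀ ht₀) (ε/3) (by linarith)
    refine ⟨δ, hδ, ?_⟩
    intro t ht hdist
    have ht' : (0:ℝ) ≤ t := ht
    have ht₀' : (0:ℝ) ≤ t₀ := ht₀
    rw [Real.dist_eq] at hdist
    have hbnear : ∀ u : ℝ, 0 ≤ u → |u - t₀| < δ → |b u - b t₀| < ε/3 := by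
      intro u hu h
      have := hδ' (by exact hu) (by rwa [Real.dist_eq])
      rwa [Real.dist_eq] at this
    have habs := abs_lt.1 hdist
    rw [Real.dist_eq, abs_lt]
    rcases le_total t t₀ with hle | hle
    · -- t ≤ t₀ : m t₀ ≤ m t
      have h1 : m t₀ ≤ m t := hanti t t₀ ht' hle
      have key : min (m t) (b t₀ - ε/3) ≤ m t₀ := by
        apply hlem t₀ _ ht₀'
        intro u hu
        rcases le_total u t with h | h
        · exact le_trans (min_le_left _ _) (hmle t u ⟨hu.1, h⟩)
        · have habsu : |u - t₀| < δ := by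
            rw [abs_lt]; constructor <;> linarith [hu.2, habs.1]
          have := abs_lt.1 (hbnear u hu.1 habsu)
          refine le_trans (min_le_right _ _) (by linarith [this.1])
      rcases le_total (m t) (b t₀ - ε/3) with h | h
      · rw [min_eq_left h] at key
        constructor <;> linarith
      · rw [min_eq_right h] at key
        have hbt : m t ≤ b t := hmle t t ⟨ht', le_refl t⟩
        have := abs_lt.1 (hbnear t ht' hdist)
        constructor <;> linarith [this.2]
    · -- t₀ ≤ t : m t ≤ m t₀
      have h1 : m t ≤ m t₀ := hanti t₀ t ht₀' hle
      have key : min (m t₀) (b t₀ - ε/3) ≤ m t := by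
        apply hlem t _ ht'
        intro u hu
        rcases le_total u t₀ with h | h
        · exact le_trans (min_le_left _ _) (hmle t₀ u ⟨hu.1, h⟩)
        · have habsu : |u - t₀| < δ := by
            rw [abs_lt]; constructor <;> linarith [hu.2, habs.2, h]
          have := abs_lt.1 (hbnear u hu.1 habsu)
          refine le_trans (min_le_right _ _) (by linarith [this.1])
      rcases le_total (m t₀) (b t₀ - ε/3) with h | h
      · rw [min_eq_left h] at key
        constructor <;> linarith
      · rw [min_eq_right h] at key
        have hbt : m t₀ ≤ b t₀ := hmle t₀ t₀ ⟨ht₀', le_refl t₀⟩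
        constructor <;> linarith
  have hleq : l = fun t => max 0 (-(m t) - x₀) := funext hl
  have hlcont : ContinuousOn l (Ici 0) := by
    rw [hleq]
    exact continuousOn_const.sup (hmcont.neg.sub continuousOn_const)
  have hxeq : x = fun t => x₀ + b t + l t := funext hx
  have hxcont : ContinuousOn x (Ici 0) := by
    rw [hxeq]
    exact (continuousOn_const.add hb).add hlcont
  have hl0 : l 0 = 0 := by
    rw [hl, hm0]
    simp
    linarith
  have hlnonneg : ∀ t, 0 ≤ l t := fun t => by rw [hl]; exact le_max_left _ _
  have hlmono : ∀ t₁ t₂, 0 ≤ t₁ → t₁ ≤ t₂ → l t₁ ≤ l t₂ := by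
    intro t₁ t₂ h1 h12
    rw [hl, hl]
    exact max_le_max le_rfl (by linarith [hanti t₁ t₂ h1 h12])
  refine ⟨hxcont, hlcont, ?_, ?_, hl0, hlmono, ?_, ?_⟩
  · rw [hx, hl0, hb0]; ring
  · intro t ht
    rw [hx, hl]
    have hbt : m t ≤ b t := hmle t t ⟨ht, le_refl t⟩
    rcases le_total (-(m t) - x₀) 0 with h | h
    · rw [max_eq_left h]; linarith
    · rw [max_eq_right h]; linarith
  · intro t₁ t₂ h1 h12 hpos
    have h02 : (0:ℝ) ≤ t₂ := h1.trans h12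
    obtain ⟨u, hu, humin⟩ := isCompact_Icc.exists_isMinOn (nonempty_Icc.2 h02)
      (hb.mono (hsub t₂))
    have hbu : b u = m t₂ := le_antisymm
      (hlem t₂ (b u) h02 (fun v hv => humin hv)) (hmle t₂ u hu)
    rcases le_or_gt u t₁ with h | h
    · have h1' : m t₁ ≤ m t₂ := hbu ▸ hmle t₁ u ⟨hu.1, h⟩
      have h2' : m t₂ ≤ m t₁ := hanti t₁ t₂ h1 h12
      rw [hl, hl, le_antisymm h2' h1']
    · have hxu := hpos u h.le hu.2
      rw [hx] at hxu
      have hbum : b u ≤ m u := hbu ▸ hanti u t₂ hu.1 hu.2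
      have hlu : l u = 0 := by
        rw [hl]
        rcases le_total (-(m u) - x₀) 0 with h' | h'
        · exact max_eq_left h'
        · exfalso
          have : l u = -(m u) - x₀ := by rw [hl]; exact max_eq_right h'
          rw [this] at hxu
          linarith
      rw [hlu] at hxu
      have hlt2 : l t₂ = 0 := by
        rw [hl, ← hbu]
        exact max_eq_left (by linarith)
      have := hlmono t₁ t₂ h1 h12
      have := hlnonneg t₁
      linarith [hlt2 ▸ hlmono t₁ t₂ h1 h12, hlnonneg t₁]
  · intro t _
    rw [hx]; ring
end

section
/- Uniqueness part of Skorokhod's lemma: Let b : [0,∞) → ℝ be continuous with b(0) = 0 and let x₀ ≥ 0. Suppose (x₁, l₁) and (x₂, l₂) are two pairs of continuous functions [0,∞) → ℝ each satisfying: x_i(0) = x₀ and x_i(t) ≥ 0 for all t; l_i(0) = 0 and l_i is non-decreasing; l_i is constant on every interval on which x_i is strictly positive; and x_i(t) = x₀ + l_i(t) + b(t) for all t. Then x₁ = x₂ and l₁ = l₂. -/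
open Set

lemma skorokhod_le_aux (b : ℝ → ℝ)
    (x₀ : ℝ) (x₁ l₁ x₂ l₂ : ℝ → ℝ)
    (hx₁c : ContinuousOn x₁ (Ici 0)) (hl₁c : ContinuousOn l₁ (Ici 0))
    (hx₂c : ContinuousOn x₂ (Ici 0))
    (hx₁0 : x₁ 0 = x₀)
    (hx₂0 : x₂ 0 = x₀) (hx₂pos : ∀ t, 0 ≤ t → 0 ≤ x₂ t)
    (hl₂mono : ∀ t₁ t₂, 0 ≤ t₁ → t₁ ≤ t₂ → l₂ t₁ ≤ l₂ t₂)
    (hl₁flat : ∀ t₁ t₂, 0 ≤ t₁ → t₁ ≤ t₂ → (∀ u, t₁ ≤ u → u ≤ t₂ → 0 < x₁ u) → l₁ t₁ = l₁ t₂)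
    (hx₁eq : ∀ t, 0 ≤ t → x₁ t = x₀ + l₁ t + b t)
    (hx₂eq : ∀ t, 0 ≤ t → x₂ t = x₀ + l₂ t + b t) :
    ∀ t, 0 ≤ t → l₁ t ≤ l₂ t := by
  intro t ht
  by_contra hlt
  push_neg at hlt
  -- difference identity
  have hdiff : ∀ u, 0 ≤ u → x₁ u - x₂ u = l₁ u - l₂ u := by
    intro u hu
    rw [hx₁eq u hu, hx₂eq u hu]; ring
  set S : Set ℝ := {u | u ∈ Icc (0:ℝ) t ∧ x₁ u ≤ x₂ u} with hS
  have h0S : (0:ℝ) ∈ S := ⟨⟨le_refl 0, ht⟩, by rw [hx₁0, hx₂0]⟩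
  have hScomp : IsCompact S := by
    have hclosed : IsClosed S := by
      have : S = Icc 0 t ∩ (fun u => x₁ u - x₂ u) ⁻¹' Iic 0 := by
        ext u; simp only [hS, mem_setOf_eq, mem_inter_iff, mem_preimage, mem_Iic, sub_nonpos]
      rw [this]
      exact ContinuousOn.preimage_isClosed_of_isClosed
        (((hx₁c.mono (Icc_subset_Ici_self)).sub (hx₂c.mono (Icc_subset_Ici_self))))
        isClosed_Icc isClosed_Iic
    exact isCompact_Icc.of_isClosed_subset hclosed (fun u hu => hu.1)
  have hSne : S.Nonempty := ⟨0, h0S⟩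
  set s := sSup S with hs
  have hsS : s ∈ S := hScomp.sSup_mem hSne
  have hs0 : 0 ≤ s := hsS.1.1
  have hst : s ≤ t := hsS.1.2
  -- t ∉ S since x₂ t < x₁ t
  have hxt : x₂ t < x₁ t := by
    have := hdiff t ht; nlinarith
  have hsnet : s < t := lt_of_le_of_ne hst (fun h => absurd (h ▸ hsS.2) (not_le.mpr hxt))
  -- on (s, t], x₁ > 0
  have hpos : ∀ u, s < u → u ≤ t → 0 < x₁ u := by
    intro u hsu hut
    have hu0 : 0 ≤ u := le_trans hs0 hsu.le
    by_contra hle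
    push_neg at hle
    have : x₁ u ≤ x₂ u := le_trans hle (hx₂pos u hu0)
    have : u ∈ S := ⟨⟨hu0, hut⟩, this⟩
    exact absurd (le_csSup hScomp.bddAbove this) (not_le.mpr hsu)
  -- l₁ constant on (s, t]
  have hflat : ∀ u, s < u → u ≤ t → l₁ u = l₁ t := by
    intro u hsu hut
    exact hl₁flat u t (le_trans hs0 hsu.le) hut (fun v hv hv' => hpos v (lt_of_lt_of_le hsu hv) hv')
  -- continuity: l₁ s = l₁ t
  have hl1st : l₁ s = l₁ t := by
    have hsub : Ioc s t ⊆ Ici (0:ℝ) := fun u hu => le_trans hs0 hu.1.le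
    have h1 : Filter.Tendsto l₁ (nhdsWithin s (Ioc s t)) (nhds (l₁ s)) :=
      (hl₁c s hs0).mono hsub
    have h2 : Filter.Tendsto l₁ (nhdsWithin s (Ioc s t)) (nhds (l₁ t)) := by
      refine Filter.Tendsto.congr' ?_ tendsto_const_nhds
      filter_upwards [self_mem_nhdsWithin] with u hu
      exact (hflat u hu.1 hu.2).symm
    have := left_nhdsWithin_Ioc_neBot hsnet
    exact tendsto_nhds_unique h1 h2
  -- at s : x₁ s ≤ x₂ s hence l₁ s ≤ l₂ s
  have hxs : x₁ s ≤ x₂ s := hsS.2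
  have hls : l₁ s ≤ l₂ s := by have := hdiff s hs0; linarith
  have : l₁ t ≤ l₂ t := by
    rw [← hl1st]
    exact le_trans hls (hl₂mono s t hs0 hst)
  linarith

/-- **Uniqueness part of Skorokhod's lemma**: for `b` continuous on `[0, ∞)` with `b 0 = 0`
and `x₀ ≥ 0`, any two pairs `(x₁, l₁)` and `(x₂, l₂)` of functions continuous on `[0, ∞)`,
each satisfying `xᵢ 0 = x₀`, `xᵢ t ≥ 0` for `t ≥ 0`, `lᵢ 0 = 0`, `lᵢ` non-decreasing on
`[0, ∞)`, `lᵢ` constant on every interval on which `xᵢ` is strictly positive, and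
`xᵢ t = x₀ + lᵢ t + b t` for `t ≥ 0`, must coincide on `[0, ∞)`. -/
theorem skorokhod_uniqueness (b : ℝ → ℝ) (hb : ContinuousOn b (Ici 0)) (hb0 : b 0 = 0)
    (x₀ : ℝ) (hx₀ : 0 ≤ x₀) (x₁ l₁ x₂ l₂ : ℝ → ℝ)
    (hx₁c : ContinuousOn x₁ (Ici 0)) (hl₁c : ContinuousOn l₁ (Ici 0))
    (hx₂c : ContinuousOn x₂ (Ici 0)) (hl₂c : ContinuousOn l₂ (Ici 0))
    (hx₁0 : x₁ 0 = x₀) (hx₁pos : ∀ t, 0 ≤ t → 0 ≤ x₁ t)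
    (hx₂0 : x₂ 0 = x₀) (hx₂pos : ∀ t, 0 ≤ t → 0 ≤ x₂ t)
    (hl₁0 : l₁ 0 = 0) (hl₁mono : ∀ t₁ t₂, 0 ≤ t₁ → t₁ ≤ t₂ → l₁ t₁ ≤ l₁ t₂)
    (hl₂0 : l₂ 0 = 0) (hl₂mono : ∀ t₁ t₂, 0 ≤ t₁ → t₁ ≤ t₂ → l₂ t₁ ≤ l₂ t₂)
    (hl₁flat : ∀ t₁ t₂, 0 ≤ t₁ → t₁ ≤ t₂ → (∀ u, t₁ ≤ u → u ≤ t₂ → 0 < x₁ u) → l₁ t₁ = l₁ t₂)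
    (hl₂flat : ∀ t₁ t₂, 0 ≤ t₁ → t₁ ≤ t₂ → (∀ u, t₁ ≤ u → u ≤ t₂ → 0 < x₂ u) → l₂ t₁ = l₂ t₂)
    (hx₁eq : ∀ t, 0 ≤ t → x₁ t = x₀ + l₁ t + b t)
    (hx₂eq : ∀ t, 0 ≤ t → x₂ t = x₀ + l₂ t + b t) :
    ∀ t, 0 ≤ t → x₁ t = x₂ t ∧ l₁ t = l₂ t := by
  intro t ht
  have h1 := skorokhod_le_aux b x₀ x₁ l₁ x₂ l₂ hx₁c hl₁c hx₂c hx₁0 hx₂0 hx₂pos hl₂mono hl₁flat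
    hx₁eq hx₂eq t ht
  have h2 := skorokhod_le_aux b x₀ x₂ l₂ x₁ l₁ hx₂c hl₂c hx₁c hx₂0 hx₁0 hx₁pos hl₁mono hl₂flat
    hx₂eq hx₁eq t ht
  have hl : l₁ t = l₂ t := le_antisymm h1 h2
  exact ⟨by rw [hx₁eq t ht, hx₂eq t ht, hl], hl⟩
end

section
/- Explicit formula in Skorokhod's lemma: Let b : [0,∞) → ℝ be continuous with b(0) = 0, let x₀ ≥ 0, and suppose (x, l) is a pair of continuous functions [0,∞) → ℝ satisfying: x(0) = x₀ and x(t) ≥ 0 for all t; l(0) = 0 and l is non-decreasing; l is constant on every interval on which x is strictly positive; and x(t) = x₀ + l(t) + b(t) for all t. Then necessarily l(t) = max(0, −m(t) − x₀) for all t ≥ 0, where m(t) = min_{0 ≤ t' ≤ t} b(t'). -/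
open Set Filter Topology

/-- **Explicit formula in Skorokhod's lemma**: for `b` continuous on `[0, ∞)` with `b 0 = 0`
and `x₀ ≥ 0`, if the pair `(x, l)` of functions continuous on `[0, ∞)` satisfies the
Skorokhod conditions (`x 0 = x₀`, `x t ≥ 0` for `t ≥ 0`, `l 0 = 0`, `l` non-decreasing,
`l` constant on every interval on which `x` is strictly positive, and
`x t = x₀ + l t + b t` for `t ≥ 0`), then necessarily
`l t = max 0 (-m t - x₀)` for all `t ≥ 0`, where `m t = min_{0 ≤ t' ≤ t} b t'`. -/
theorem skorokhod_explicit_formula (b : ℝ → ℝ) (hb : ContinuousOn b (Ici 0)) (hb0 : b 0 = 0)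
    (x₀ : ℝ) (hx₀ : 0 ≤ x₀) (x l : ℝ → ℝ)
    (hxc : ContinuousOn x (Ici 0)) (hlc : ContinuousOn l (Ici 0))
    (hx0 : x 0 = x₀) (hxpos : ∀ t, 0 ≤ t → 0 ≤ x t)
    (hl0 : l 0 = 0) (hlmono : ∀ t₁ t₂, 0 ≤ t₁ → t₁ ≤ t₂ → l t₁ ≤ l t₂)
    (hlflat : ∀ t₁ t₂, 0 ≤ t₁ → t₁ ≤ t₂ → (∀ u, t₁ ≤ u → u ≤ t₂ → 0 < x u) → l t₁ = l t₂)
    (hxeq : ∀ t, 0 ≤ t → x t = x₀ + l t + b t) :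
    ∀ t, 0 ≤ t → l t = max 0 (-(sInf (b '' Icc 0 t)) - x₀) := by
  intro t ht
  set m : ℝ := sInf (b '' Icc 0 t) with hm
  set M : ℝ := max 0 (-m - x₀) with hM
  have hbd : BddBelow (b '' Icc 0 t) :=
    (isCompact_Icc.image_of_continuousOn (hb.mono Icc_subset_Ici_self)).bddBelow
  have hne : (b '' Icc 0 t).Nonempty := ⟨b 0, ⟨0, ⟨le_refl 0, ht⟩, rfl⟩⟩
  have hmle : ∀ u, u ∈ Icc (0:ℝ) t → m ≤ b u := fun u hu => csInf_le hbd ⟨u, hu, rfl⟩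
  have hlt0 : 0 ≤ l t := hl0 ▸ hlmono 0 t le_rfl ht
  -- lower bound
  have h1 : M ≤ l t := by
    apply max_le hlt0
    have : -x₀ - l t ≤ m := by
      apply le_csInf hne
      rintro y ⟨u, hu, rfl⟩
      have hxu := hxpos u hu.1
      rw [hxeq u hu.1] at hxu
      have := hlmono u t hu.1 hu.2
      linarith
    linarith
  -- upper bound
  have h2 : l t ≤ M := by
    by_contra h
    push_neg at h
    set S : Set ℝ := Icc 0 t ∩ l ⁻¹' Iic M with hS
    have hS0 : (0:ℝ) ∈ S := ⟨⟨le_refl 0, ht⟩, by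
      simp only [mem_preimage, mem_Iic, hl0]
      exact le_max_left _ _⟩
    have hSb : BddAbove S := ⟨t, fun u hu => hu.1.2⟩
    have hScl : IsClosed S :=
      (hlc.mono Icc_subset_Ici_self).preimage_isClosed_of_isClosed isClosed_Icc isClosed_Iic
    obtain ⟨s, hs⟩ : ∃ s : ℝ, s = sSup S := ⟨_, rfl⟩
    have hsS : s ∈ S := hs ▸ hScl.csSup_mem ⟨0, hS0⟩ hSb
    have hs0 : 0 ≤ s := hsS.1.1
    have hlsM : l s ≤ M := hsS.2
    have hst : s < t := lt_of_le_of_ne hsS.1.2 (by rintro rfl; exact absurd h (not_lt.mpr hlsM))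
    have hgt : ∀ v, s < v → v ≤ t → M < l v := by
      intro v hv1 hv2
      by_contra hc
      push_neg at hc
      exact absurd (hs ▸ le_csSup hSb ⟨⟨le_trans hs0 hv1.le, hv2⟩, hc⟩) (not_le.mpr hv1)
    have hxv : ∀ v, s < v → v ≤ t → 0 < x v := by
      intro v hv1 hv2
      have hv0 : (0:ℝ) ≤ v := le_trans hs0 hv1.le
      rw [hxeq v hv0]
      have h3 := hgt v hv1 hv2
      have h4 := hmle v ⟨hv0, hv2⟩
      have h5 : -m - x₀ ≤ M := le_max_right _ _
      linarith
    have hflat : ∀ u ∈ Ioc s t, l u = l t := fun u hu =>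
      hlflat u t (le_trans hs0 hu.1.le) hu.2
        (fun v hv1 hv2 => hxv v (lt_of_lt_of_le hu.1 hv1) hv2)
    have hcw : ContinuousWithinAt l (Ioc s t) s :=
      (hlc s hs0).mono (fun v hv => le_trans hs0 hv.1.le)
    have hneb : (𝓝[Ioc s t] s).NeBot := by
      refine mem_closure_iff_nhdsWithin_neBot.mp ?_
      rw [closure_Ioc hst.ne]
      exact left_mem_Icc.mpr hst.le
    have htend : Tendsto l (𝓝[Ioc s t] s) (𝓝 (l t)) := by
      refine Tendsto.congr' ?_ tendsto_const_nhds
      filter_upwards [eventually_mem_nhdsWithin] with v hv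
      exact (hflat v hv).symm
    have : l s = l t := tendsto_nhds_unique hcw htend
    linarith
  exact le_antisymm h2 h1
end

section
/- The explicit Skorokhod local-time term increases only on the zero set of the reflected path: Let b : [0,∞) → ℝ be continuous with b(0) = 0, let x₀ ≥ 0, and set m(t) = min_{0 ≤ t' ≤ t} b(t'), l(t) = max(0, −m(t) − x₀), x(t) = x₀ + b(t) + l(t). Then for all 0 ≤ t₁ ≤ t₂ with l(t₁) < l(t₂), there exists u ∈ [t₁, t₂] with x(u) = 0. -/
open Set

/-- **The explicit Skorokhod local-time term increases only on the zero set of the reflected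
path**: for `b` continuous on `[0, ∞)` with `b 0 = 0` and `x₀ ≥ 0`, set
`m t = min_{0 ≤ t' ≤ t} b t'`, `l t = max 0 (-m t - x₀)` and `x t = x₀ + b t + l t`.
Then whenever `0 ≤ t₁ ≤ t₂` and `l t₁ < l t₂`, there is some `u ∈ [t₁, t₂]` with `x u = 0`. -/
theorem skorokhod_increases_only_on_zero_set (b : ℝ → ℝ)
    (hb : ContinuousOn b (Ici 0)) (hb0 : b 0 = 0)
    (x₀ : ℝ) (hx₀ : 0 ≤ x₀) (m l x : ℝ → ℝ)
    (hm : ∀ t, m t = sInf (b '' Icc 0 t))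
    (hl : ∀ t, l t = max 0 (-(m t) - x₀))
    (hx : ∀ t, x t = x₀ + b t + l t) :
    ∀ t₁ t₂, 0 ≤ t₁ → t₁ ≤ t₂ → l t₁ < l t₂ → ∃ u, t₁ ≤ u ∧ u ≤ t₂ ∧ x u = 0 := by
  intro t₁ t₂ ht₁ h12 hll
  have ht₂ : (0:ℝ) ≤ t₂ := ht₁.trans h12
  -- min attained on [0, t₂]
  have hbc : ContinuousOn b (Icc 0 t₂) := hb.mono (fun y hy => hy.1)
  obtain ⟨u, hu, humin⟩ := (isCompact_Icc (a := (0:ℝ)) (b := t₂)).exists_isMinOn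
    (nonempty_Icc.mpr ht₂) hbc
  have hleast : IsLeast (b '' Icc 0 t₂) (b u) := by
    constructor
    · exact mem_image_of_mem b hu
    · rintro y ⟨z, hz, rfl⟩; exact humin hz
  have hmt₂ : m t₂ = b u := by rw [hm]; exact hleast.csInf_eq
  -- l t₂ > 0
  have hl₁ : (0:ℝ) ≤ l t₁ := by rw [hl]; exact le_max_left _ _
  have hl₂pos : 0 < l t₂ := lt_of_le_of_lt hl₁ hll
  have hl₂ : l t₂ = -(m t₂) - x₀ := by
    rw [hl] at hl₂pos ⊢
    rcases max_cases (0:ℝ) (-(m t₂) - x₀) with ⟨h1, _⟩ | ⟨h1, _⟩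
    · rw [h1] at hl₂pos; exact absurd hl₂pos (lt_irrefl 0)
    · exact h1
  -- m t₂ < m t₁
  have hmlt : m t₂ < m t₁ := by
    have h1 : -(m t₁) - x₀ ≤ l t₁ := by rw [hl]; exact le_max_right _ _
    have : -(m t₁) - x₀ < -(m t₂) - x₀ := lt_of_le_of_lt h1 (hl₂ ▸ hll)
    linarith
  -- u > t₁
  have hut₁ : t₁ ≤ u := by
    by_contra h
    push_neg at h
    have hu1 : u ∈ Icc (0:ℝ) t₁ := ⟨hu.1, h.le⟩
    have hbd : BddBelow (b '' Icc 0 t₁) := by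
      refine ⟨b u, ?_⟩
      rintro y ⟨z, hz, rfl⟩
      exact humin ⟨hz.1, hz.2.trans h12⟩
    have : m t₁ ≤ b u := by
      rw [hm]; exact csInf_le hbd (mem_image_of_mem b hu1)
    rw [← hmt₂] at this
    exact absurd hmlt (not_lt.mpr this)
  -- m u = b u
  have hmu : m u = b u := by
    rw [hm]
    apply le_antisymm
    · have hbd : BddBelow (b '' Icc 0 u) := by
        refine ⟨b u, ?_⟩
        rintro y ⟨z, hz, rfl⟩
        exact humin ⟨hz.1, hz.2.trans hu.2⟩
      exact csInf_le hbd (mem_image_of_mem b ⟨hu.1, le_refl u⟩)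
    · apply le_csInf ((nonempty_Icc.mpr hu.1).image b)
      rintro y ⟨z, hz, rfl⟩
      exact humin ⟨hz.1, hz.2.trans hu.2⟩
  -- l u = -(m u) - x₀
  have hlupos : 0 < -(m u) - x₀ := by
    rw [hmu, ← hmt₂]; rw [hl₂] at hl₂pos; linarith
  have hlu : l u = -(m u) - x₀ := by
    rw [hl]; exact max_eq_right hlupos.le
  refine ⟨u, hut₁, hu.2, ?_⟩
  rw [hx, hlu, ← hmu]; ring
end

section
/- Convolution semigroup property (infinite divisibility) of the one-sided stable density of index 1/2: For real a > 0 and a' > 0, define f_a(t) = (a / √(2π)) · t^{-3/2} · e^{-a²/(2t)} for t > 0. Then for every t > 0, ∫₀^t f_a(u) · f_{a'}(t − u) du = f_{a+a'}(t). -/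
open Set Real MeasureTheory

/-- The one-sided stable density of index `1/2` with parameter `a`:
`f_a(t) = (a / √(2π)) t^{-3/2} e^{-a²/(2t)}` for `t > 0`. -/
noncomputable def stableHalfDensity (a t : ℝ) : ℝ :=
  a / Real.sqrt (2 * π) * t ^ (-(3 : ℝ) / 2) * Real.exp (-a ^ 2 / (2 * t))


lemma glasser_integrable (c : ℝ) (hc : 0 < c) :
    MeasureTheory.IntegrableOn (fun z : ℝ => Real.exp (-(z - c/z)^2/2)) (Ioi 0) := by
  have hgfun : (fun z : ℝ => Real.exp (-z^2/2)) = fun z => Real.exp (-(1/2) * z^2) := by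
    funext z; ring_nf
  have Gint : MeasureTheory.Integrable (fun z : ℝ => Real.exp (-z^2/2)) := by
    rw [hgfun]; exact integrable_exp_neg_mul_sq (by norm_num)
  have hemeas : Measurable (fun z : ℝ => Real.exp (-(z - c/z)^2/2)) := by
    fun_prop
  apply MeasureTheory.Integrable.mono' ((Gint.const_mul (Real.exp c)).integrableOn)
    hemeas.aestronglyMeasurable
  filter_upwards [MeasureTheory.ae_restrict_mem measurableSet_Ioi] with z hz
  have hz0 : z ≠ 0 := ne_of_gt hz
  have hzc : z * (c/z) = c := by field_simp
  rw [Real.norm_eq_abs, abs_of_pos (Real.exp_pos _), ← Real.exp_add]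
  apply Real.exp_le_exp.2
  nlinarith [sq_nonneg (c/z)]

lemma glasser (c : ℝ) (hc : 0 < c) :
    ∫ z in Ioi (0:ℝ), Real.exp (-(z - c/z)^2/2) = Real.sqrt (π/2) := by
  set g : ℝ → ℝ := fun s => Real.exp (-s^2/2) with hg
  -- derivative facts
  have hφd : ∀ z ∈ Ioi (0:ℝ), HasDerivWithinAt (fun z => z - c/z) (1 + c/z^2) (Ioi 0) z := by
    intro z hz
    have hz0 : z ≠ 0 := ne_of_gt hz
    have h1 : HasDerivAt (fun z : ℝ => z - c/z) (1 - c * (-(z^2)⁻¹)) z := by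
      simp only [div_eq_mul_inv]; exact
        (hasDerivAt_id' z).sub ((hasDerivAt_inv hz0).const_mul c)
    have : (1 - c * (-(z^2)⁻¹)) = 1 + c/z^2 := by field_simp; ring
    exact (this ▸ h1).hasDerivWithinAt
  have hφinj : InjOn (fun z => z - c/z) (Ioi (0:ℝ)) := by
    have : StrictMonoOn (fun z => z - c/z) (Ioi (0:ℝ)) := by
      intro x hx y hy hxy
      have : c/y < c/x := div_lt_div_of_pos_left hc hx hxy
      simp only
      linarith
    exact this.injOn
  have hφim : (fun z => z - c/z) '' Ioi (0:ℝ) = univ := by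
    apply eq_univ_of_forall
    intro s
    set r := Real.sqrt (s^2 + 4*c) with hrdef
    have hr2 : r^2 = s^2 + 4*c := Real.sq_sqrt (by nlinarith [sq_nonneg s])
    have hrpos : 0 < r := Real.sqrt_pos.2 (by nlinarith [sq_nonneg s])
    have hzpos : 0 < (s + r)/2 := by
      rcases le_or_gt 0 s with h | h
      · positivity
      · nlinarith
    refine ⟨(s+r)/2, hzpos, ?_⟩
    have hz0 : (s+r)/2 ≠ 0 := ne_of_gt hzpos
    have h3 : c / ((s+r)/2) = (r-s)/2 := by
      rw [div_eq_div_iff hz0 two_ne_zero]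
      linear_combination -hr2/2
    simp only
    rw [h3]; ring
  have hψd : ∀ z ∈ Ioi (0:ℝ), HasDerivWithinAt (fun z => c/z) (-(c/z^2)) (Ioi 0) z := by
    intro z hz
    have hz0 : z ≠ 0 := ne_of_gt hz
    have h1 : HasDerivAt (fun z : ℝ => c/z) (c * (-(z^2)⁻¹)) z := by
      simpa [div_eq_mul_inv] using (hasDerivAt_inv hz0).const_mul c
    have : c * (-(z^2)⁻¹) = -(c/z^2) := by field_simp
    exact (this ▸ h1).hasDerivWithinAt
  have hψinj : InjOn (fun z => c/z) (Ioi (0:ℝ)) := by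
    intro x hx y hy h
    simp only at h
    have hx0 : x ≠ 0 := ne_of_gt hx
    have hy0 : y ≠ 0 := ne_of_gt hy
    field_simp at h
    exact h.symm
  have hψim : (fun z => c/z) '' Ioi (0:ℝ) = Ioi (0:ℝ) := by
    ext w
    constructor
    · rintro ⟨z, hz, rfl⟩; exact div_pos hc hz
    · intro hw
      exact ⟨c/w, div_pos hc hw, by field_simp⟩
  -- change of variables 1
  have h1 : ∫ s : ℝ, g s = ∫ z in Ioi (0:ℝ), |1 + c/z^2| * g (z - c/z) := by
    rw [← MeasureTheory.setIntegral_univ, ← hφim]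
    exact integral_image_eq_integral_abs_deriv_smul measurableSet_Ioi hφd hφinj g
  -- change of variables 2
  have h2 : ∫ w in Ioi (0:ℝ), Real.exp (-(w - c/w)^2/2)
      = ∫ z in Ioi (0:ℝ), |(-(c/z^2))| * Real.exp (-(c/z - z)^2/2) := by
    have := integral_image_eq_integral_abs_deriv_smul measurableSet_Ioi hψd hψinj
      (fun w => Real.exp (-(w - c/w)^2/2))
    rw [hψim] at this
    rw [this]
    apply setIntegral_congr_fun measurableSet_Ioi
    intro z hz
    have hz0 : z ≠ 0 := ne_of_gt hz
    have : c / (c/z) = z := by field_simp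
    simp only [smul_eq_mul, this]
  -- basic facts
  have hgfun : (fun z : ℝ => Real.exp (-z^2/2)) = fun z => Real.exp (-(1/2) * z^2) := by
    funext z; ring_nf
  have Gint : Integrable (fun z : ℝ => Real.exp (-z^2/2)) := by
    rw [hgfun]; exact integrable_exp_neg_mul_sq (by norm_num)
  have hgauss : ∫ s : ℝ, Real.exp (-s^2/2) = Real.sqrt (2*π) := by
    rw [hgfun, integral_gaussian]
    congr 1
    rw [div_eq_iff (by norm_num : (1:ℝ)/2 ≠ 0)]
    ring
  have hemeas : Measurable (fun z : ℝ => Real.exp (-(z - c/z)^2/2)) := by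
    fun_prop
  have heIoi : IntegrableOn (fun z : ℝ => Real.exp (-(z - c/z)^2/2)) (Ioi 0) := by
    apply Integrable.mono' ((Gint.const_mul (Real.exp c)).integrableOn)
      hemeas.aestronglyMeasurable
    filter_upwards [MeasureTheory.ae_restrict_mem measurableSet_Ioi] with z hz
    have hz0 : z ≠ 0 := ne_of_gt hz
    have hzc : z * (c/z) = c := by field_simp
    rw [Real.norm_eq_abs, abs_of_pos (Real.exp_pos _), ← Real.exp_add]
    apply Real.exp_le_exp.2
    nlinarith [sq_nonneg (c/z)]
  have hB : IntegrableOn (fun z => |1 + c/z^2| * g (z - c/z)) (Ioi 0) := by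
    have := (integrableOn_image_iff_integrableOn_abs_deriv_smul measurableSet_Ioi
      hφd hφinj g).1
    rw [hφim] at this
    exact this Gint.integrableOn
  have hcceq : ∀ z ∈ Ioi (0:ℝ),
      (c/z^2) * Real.exp (-(z - c/z)^2/2) = |(-(c/z^2))| * Real.exp (-(c/z - z)^2/2) := by
    intro z hz
    have hz0 : (0:ℝ) < z := hz
    have h4 : (c/z - z)^2 = (z - c/z)^2 := by ring
    rw [h4, abs_neg, abs_of_pos (by positivity : (0:ℝ) < c/z^2)]
  have hBeq : ∀ z ∈ Ioi (0:ℝ), |1 + c/z^2| * g (z - c/z)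
      = Real.exp (-(z - c/z)^2/2) + (c/z^2) * Real.exp (-(z - c/z)^2/2) := by
    intro z hz
    have hz0 : (0:ℝ) < z := hz
    have : |1 + c/z^2| = 1 + c/z^2 := abs_of_pos (by positivity)
    rw [this, hg]
    ring
  have hccint : IntegrableOn (fun z => (c/z^2) * Real.exp (-(z - c/z)^2/2)) (Ioi 0) := by
    apply Integrable.mono' hB
    · apply Measurable.aestronglyMeasurable
      fun_prop
    · filter_upwards [MeasureTheory.ae_restrict_mem measurableSet_Ioi] with z hz
      have hz0 : (0:ℝ) < z := hz
      rw [Real.norm_eq_abs, abs_of_pos (by positivity), hBeq z hz]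
      linarith [Real.exp_pos (-(z - c/z)^2/2)]
  -- combine
  have key : Real.sqrt (2*π)
      = (∫ z in Ioi (0:ℝ), Real.exp (-(z - c/z)^2/2))
        + ∫ z in Ioi (0:ℝ), (c/z^2) * Real.exp (-(z - c/z)^2/2) := by
    rw [← hgauss]
    calc ∫ s : ℝ, Real.exp (-s^2/2) = ∫ z in Ioi (0:ℝ), |1 + c/z^2| * g (z - c/z) := h1
    _ = ∫ z in Ioi (0:ℝ), (Real.exp (-(z - c/z)^2/2) + (c/z^2) * Real.exp (-(z - c/z)^2/2)) :=
        setIntegral_congr_fun measurableSet_Ioi hBeq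
    _ = _ := integral_add heIoi hccint
  have hJJ : ∫ z in Ioi (0:ℝ), (c/z^2) * Real.exp (-(z - c/z)^2/2)
      = ∫ z in Ioi (0:ℝ), Real.exp (-(z - c/z)^2/2) := by
    rw [h2]
    exact setIntegral_congr_fun measurableSet_Ioi hcceq
  have hsq : Real.sqrt (2*π) = 2 * Real.sqrt (π/2) := by
    rw [show (2:ℝ)*π = 2^2 * (π/2) by ring, Real.sqrt_mul (by positivity),
      Real.sqrt_sq (by norm_num : (0:ℝ) ≤ 2)]
  rw [hJJ] at key
  linarith [key, hsq]

lemma rpow_m32 (x : ℝ) (hx : 0 < x) : x ^ (-(3:ℝ)/2) = 1/(x * Real.sqrt x) := by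
  rw [show -(3:ℝ)/2 = -(3/2) by norm_num, Real.rpow_neg hx.le,
    show (3:ℝ)/2 = 1 + 1/2 by norm_num, Real.rpow_add hx, Real.rpow_one,
    ← Real.sqrt_eq_rpow, one_div]

noncomputable def phi1 (a t u : ℝ) : ℝ := a / Real.sqrt t * Real.sqrt (t/u - 1)

noncomputable def Dphi1 (a t u : ℝ) : ℝ :=
  -(a * Real.sqrt t / (2 * (u * Real.sqrt u) * Real.sqrt (t - u)))

lemma alg1 (a u t p q r : ℝ) (hp : 0 < p) (hq : 0 < q) (hr : 0 < r)
    (hpu : p^2 = u) (hrt : r^2 = t) :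
    a / r * (1/(2*(q/p)) * -(t/u^2)) = -(a * r / (2 * (u * p) * q)) := by
  subst hpu hrt
  field_simp

lemma phi1_hasDeriv (a t : ℝ) (ht : 0 < t) :
    ∀ u ∈ Ioo (0:ℝ) t, HasDerivWithinAt (phi1 a t) (Dphi1 a t u) (Ioo 0 t) u := by
  intro u hu
  have hu1 : 0 < u := hu.1
  have htu : 0 < t - u := by linarith [hu.2]
  have hpos : 0 < t/u - 1 := by
    rw [sub_pos, lt_div_iff₀ hu1, one_mul]; exact hu.2
  have h0 : HasDerivAt (fun x : ℝ => t/x - 1) (-(t/u^2)) u := by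
    have h := ((hasDerivAt_inv hu1.ne').const_mul t).sub_const 1
    simpa [div_eq_mul_inv, mul_neg] using h
  have h1 := (Real.hasDerivAt_sqrt hpos.ne').comp u h0
  have h2 := h1.const_mul (a / Real.sqrt t)
  have hqp : Real.sqrt (t/u - 1) = Real.sqrt (t-u) / Real.sqrt u := by
    rw [show t/u - 1 = (t-u)/u by field_simp, Real.sqrt_div htu.le]
  have hval : a / Real.sqrt t * (1/(2 * Real.sqrt (t/u - 1)) * -(t/u^2)) = Dphi1 a t u := by
    rw [hqp]
    exact alg1 a u t _ _ _ (Real.sqrt_pos.2 hu1) (Real.sqrt_pos.2 htu) (Real.sqrt_pos.2 ht)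
      (Real.sq_sqrt hu1.le) (Real.sq_sqrt ht.le)
  exact (hval ▸ h2).hasDerivWithinAt

lemma phi1_strictAnti (a t : ℝ) (ha : 0 < a) (ht : 0 < t) :
    StrictAntiOn (phi1 a t) (Ioo 0 t) := by
  intro x hx y hy hxy
  unfold phi1
  have h1 : t/y < t/x := div_lt_div_of_pos_left ht hx.1 hxy
  have h2 : 0 ≤ t/y - 1 := by
    rw [sub_nonneg, le_div_iff₀ hy.1, one_mul]; exact hy.2.le
  have h3 : Real.sqrt (t/y - 1) < Real.sqrt (t/x - 1) := Real.sqrt_lt_sqrt h2 (by linarith)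
  have h4 : 0 < a / Real.sqrt t := by positivity
  exact mul_lt_mul_of_pos_left h3 h4

lemma phi1_image (a t : ℝ) (ha : 0 < a) (ht : 0 < t) :
    phi1 a t '' Ioo 0 t = Ioi 0 := by
  have hrt : 0 < Real.sqrt t := Real.sqrt_pos.2 ht
  ext z
  constructor
  · rintro ⟨u, hu, rfl⟩
    have hpos : 0 < t/u - 1 := by
      rw [sub_pos, lt_div_iff₀ hu.1, one_mul]; exact hu.2
    exact mul_pos (by positivity) (Real.sqrt_pos.2 hpos)
  · intro hz
    have hz0 : (0:ℝ) < z := hz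
    have hden : (0:ℝ) < a^2 + t*z^2 := by positivity
    refine ⟨a^2*t/(a^2 + t*z^2), ⟨by positivity, ?_⟩, ?_⟩
    · rw [div_lt_iff₀ hden]
      nlinarith [mul_pos (mul_pos ht ht) (mul_pos hz0 hz0)]
    · unfold phi1
      have h5 : t / (a^2*t/(a^2+t*z^2)) - 1 = z^2 * t / a^2 := by
        rw [div_div_eq_mul_div]
        field_simp
        ring
      have h6 : z^2 * t / a^2 = (z * Real.sqrt t / a)^2 := by
        rw [div_pow, mul_pow, Real.sq_sqrt ht.le]
      rw [h5, h6, Real.sqrt_sq (by positivity)]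
      field_simp

lemma alg2 (a a' t p q r : ℝ) (ha : 0 < a) (hp : 0 < p) (hq : 0 < q) (hr : 0 < r)
    (hrt : r^2 = t) :
    a/r*(q/p) - (a*a'/t)/(a/r*(q/p)) = a/r*(q/p) - a'/r*(p/q) := by
  subst hrt
  congr 1
  field_simp

lemma alg2' (a a' t p q r : ℝ) (ha' : 0 < a') (hp : 0 < p) (hq : 0 < q) (hr : 0 < r)
    (hrt : r^2 = t) :
    a'/r*(p/q) - (a*a'/t)/(a'/r*(p/q)) = -(a/r*(q/p) - a'/r*(p/q)) := by
  subst hrt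
  have h : (a*a'/r^2)/(a'/r*(p/q)) = a/r*(q/p) := by
    field_simp
  rw [h]
  ring

lemma alg3 (a a' u v t p q r : ℝ) (hp : 0 < p) (hq : 0 < q) (hr : r ≠ 0)
    (hpu : p^2 = u) (hqv : q^2 = v) (ht : u + v = t) (hrt : r^2 = t) :
    -a^2/(2*u) + -a'^2/(2*v)
      = -((a+a')^2/(2*t)) + -(a/r*(q/p) - a'/r*(p/q))^2/2 := by
  subst hpu hqv
  subst ht
  have hw : (a/r*(q/p) - a'/r*(p/q))^2 = (a*(q/p) - a'*(p/q))^2 / r^2 := by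
    field_simp
  rw [hw, hrt]
  field_simp
  ring

lemma alg4 (a a' u v t p q r s : ℝ) (hp : 0 < p) (hq : 0 < q) (hr : 0 < r) (hs : 0 < s)
    (hpu : p^2 = u) (hqv : q^2 = v) (ht : u + v = t) (hs2 : s^2 = 2*π) :
    a/s * (1/(u*p)) * (a'/s * (1/(v*q)))
      = a'/(π*t*r) * (a*r/(2*(u*p)*q)) + a/(π*t*r) * (a'*r/(2*(v*q)*p)) := by
  subst hpu hqv
  subst ht
  have hπ : (0:ℝ) < π := Real.pi_pos
  field_simp
  linear_combination (-a*a'*(q^2+p^2)) * hs2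

lemma combine (A B C1 C2 d1 d2 x y k w : ℝ) (hxy : x + y = k + w)
    (hAB : A*B = C1*d1 + C2*d2) :
    (A * Real.exp x) * (B * Real.exp y)
      = Real.exp k * (C1*(d1*Real.exp w) + C2*(d2*Real.exp w)) := by
  have h : (A * Real.exp x) * (B * Real.exp y) = (A*B) * Real.exp (x+y) := by
    rw [Real.exp_add]; ring
  rw [h, hxy, hAB, Real.exp_add]; ring

lemma pointwise_id (a a' t u : ℝ) (ha : 0 < a) (ha' : 0 < a') (ht : 0 < t)
    (hu1 : 0 < u) (hu2 : u < t) :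
    stableHalfDensity a u * stableHalfDensity a' (t-u)
    = Real.exp (-((a+a')^2/(2*t))) *
      (a' / (π * t * Real.sqrt t) *
        (|Dphi1 a t u| * Real.exp (-(phi1 a t u - (a*a'/t)/phi1 a t u)^2/2))
       + a / (π * t * Real.sqrt t) *
        (|-Dphi1 a' t (t-u)| *
          Real.exp (-(phi1 a' t (t-u) - (a*a'/t)/phi1 a' t (t-u))^2/2))) := by
  have htu : 0 < t - u := by linarith
  have hp : 0 < Real.sqrt u := Real.sqrt_pos.2 hu1
  have hq : 0 < Real.sqrt (t-u) := Real.sqrt_pos.2 htu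
  have hr : 0 < Real.sqrt t := Real.sqrt_pos.2 ht
  have hp2 : Real.sqrt u ^ 2 = u := Real.sq_sqrt hu1.le
  have hq2 : Real.sqrt (t-u) ^ 2 = t - u := Real.sq_sqrt htu.le
  have hr2 : Real.sqrt t ^ 2 = t := Real.sq_sqrt ht.le
  have hqp : Real.sqrt (t/u - 1) = Real.sqrt (t-u) / Real.sqrt u := by
    rw [show t/u - 1 = (t-u)/u by field_simp, Real.sqrt_div htu.le]
  have hpq : Real.sqrt (t/(t-u) - 1) = Real.sqrt u / Real.sqrt (t-u) := by
    rw [show t/(t-u) - 1 = u/(t-u) by field_simp; ring, Real.sqrt_div hu1.le]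
  have hphi1 : phi1 a t u = a / Real.sqrt t * (Real.sqrt (t-u) / Real.sqrt u) := by
    unfold phi1; rw [hqp]
  have hphi2 : phi1 a' t (t-u) = a' / Real.sqrt t * (Real.sqrt u / Real.sqrt (t-u)) := by
    unfold phi1; rw [hpq]
  have hwarg1 : phi1 a t u - (a*a'/t)/phi1 a t u
      = a/Real.sqrt t*(Real.sqrt (t-u)/Real.sqrt u)
        - a'/Real.sqrt t*(Real.sqrt u/Real.sqrt (t-u)) := by
    rw [hphi1]
    exact alg2 a a' t _ _ _ ha hp hq hr hr2
  have hwarg2 : phi1 a' t (t-u) - (a*a'/t)/phi1 a' t (t-u)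
      = -(a/Real.sqrt t*(Real.sqrt (t-u)/Real.sqrt u)
        - a'/Real.sqrt t*(Real.sqrt u/Real.sqrt (t-u))) := by
    rw [hphi2]
    exact alg2' a a' t _ _ _ ha' hp hq hr hr2
  have hD1 : |Dphi1 a t u|
      = a * Real.sqrt t / (2*(u*Real.sqrt u)*Real.sqrt (t-u)) := by
    unfold Dphi1
    rw [abs_neg, abs_of_pos (by positivity)]
  have hD2 : |-Dphi1 a' t (t-u)|
      = a' * Real.sqrt t / (2*((t-u)*Real.sqrt (t-u))*Real.sqrt u) := by
    unfold Dphi1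
    rw [show t-(t-u) = u by ring, neg_neg, abs_of_pos (by positivity)]
  unfold stableHalfDensity
  rw [rpow_m32 u hu1, rpow_m32 (t-u) htu, hD1, hD2, hwarg1, hwarg2, neg_sq]
  exact combine _ _ _ _ _ _ _ _ _ _
    (alg3 a a' u (t-u) t _ _ _ hp hq hr.ne' hp2 hq2 (by ring) hr2)
    (alg4 a a' u (t-u) t _ _ _ _ hp hq hr (by positivity) hp2 hq2 (by ring)
      (Real.sq_sqrt (by positivity)))

/-- **Convolution semigroup property (infinite divisibility) of the one-sided stable density
of index 1/2**: for reals `a > 0` and `a' > 0` and every `t > 0`,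
`∫₀^t f_a(u) f_{a'}(t - u) du = f_{a+a'}(t)`. -/
theorem stable_half_density_convolution (a a' : ℝ) (ha : 0 < a) (ha' : 0 < a') :
    ∀ t : ℝ, 0 < t →
      ∫ u in Ioo (0 : ℝ) t, stableHalfDensity a u * stableHalfDensity a' (t - u) =
        stableHalfDensity (a + a') t := by
  intro t ht
  have hc0 : 0 < a*a'/t := by positivity
  set c : ℝ := a*a'/t with hcdef
  set g : ℝ → ℝ := fun z => Real.exp (-(z - c/z)^2/2) with hg
  have hmaps : MapsTo (fun u : ℝ => t - u) (Ioo 0 t) (Ioo 0 t) := by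
    intro u hu
    constructor
    · show (0:ℝ) < t - u
      linarith [hu.2]
    · show t - u < t
      linarith [hu.1]
  have hd1 := phi1_hasDeriv a t ht
  have hinj1 := (phi1_strictAnti a t ha ht).injOn
  have himg1 := phi1_image a t ha ht
  have hd2 : ∀ u ∈ Ioo (0:ℝ) t,
      HasDerivWithinAt (fun u => phi1 a' t (t-u)) (-Dphi1 a' t (t-u)) (Ioo 0 t) u := by
    intro u hu
    have h1 := phi1_hasDeriv a' t ht (t-u) (hmaps hu)
    have h2 : HasDerivWithinAt (fun u : ℝ => t - u) (-1) (Ioo 0 t) u :=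
      ((hasDerivAt_id u).const_sub t).hasDerivWithinAt
    have h3 := HasDerivWithinAt.comp u h1 h2 hmaps
    rw [mul_neg_one] at h3; exact h3
  have hinj2 : InjOn (fun u => phi1 a' t (t-u)) (Ioo 0 t) := by
    intro x hx y hy h
    have := (phi1_strictAnti a' t ha' ht).injOn (hmaps hx) (hmaps hy) h
    simp only at this
    linarith
  have himg2 : (fun u => phi1 a' t (t-u)) '' Ioo 0 t = Ioi 0 := by
    rw [show (fun u => phi1 a' t (t-u)) = (phi1 a' t) ∘ (fun u : ℝ => t - u) from rfl,
      Set.image_comp]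
    have him : (fun u : ℝ => t - u) '' Ioo 0 t = Ioo 0 t := by
      rw [Set.image_const_sub_Ioo]
      simp
    rw [him, phi1_image a' t ha' ht]
  have hcov1 : ∫ u in Ioo (0:ℝ) t, |Dphi1 a t u| * g (phi1 a t u) = Real.sqrt (π/2) := by
    have h := integral_image_eq_integral_abs_deriv_smul measurableSet_Ioo hd1 hinj1 g
    rw [himg1] at h
    simp only [smul_eq_mul] at h
    rw [← h, hg]
    exact glasser c hc0
  have hcov2 : ∫ u in Ioo (0:ℝ) t, |-Dphi1 a' t (t-u)| * g (phi1 a' t (t-u))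
      = Real.sqrt (π/2) := by
    have h := integral_image_eq_integral_abs_deriv_smul measurableSet_Ioo hd2 hinj2 g
    rw [himg2] at h
    simp only [smul_eq_mul] at h
    rw [← h, hg]
    exact glasser c hc0
  have hint1 : IntegrableOn (fun u => |Dphi1 a t u| * g (phi1 a t u)) (Ioo 0 t) := by
    have h := integrableOn_image_iff_integrableOn_abs_deriv_smul measurableSet_Ioo hd1 hinj1 g
    rw [himg1] at h
    simpa [smul_eq_mul] using h.1 (by rw [hg]; exact glasser_integrable c hc0)
  have hint2 : IntegrableOn (fun u => |-Dphi1 a' t (t-u)| * g (phi1 a' t (t-u))) (Ioo 0 t) := by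
    have h := integrableOn_image_iff_integrableOn_abs_deriv_smul measurableSet_Ioo hd2 hinj2 g
    rw [himg2] at h
    simpa [smul_eq_mul] using h.1 (by rw [hg]; exact glasser_integrable c hc0)
  have hpt : ∀ u ∈ Ioo (0:ℝ) t, stableHalfDensity a u * stableHalfDensity a' (t-u)
      = Real.exp (-((a+a')^2/(2*t))) *
        (a' / (π * t * Real.sqrt t) * (|Dphi1 a t u| * g (phi1 a t u))
         + a / (π * t * Real.sqrt t) * (|-Dphi1 a' t (t-u)| * g (phi1 a' t (t-u)))) := by
    intro u hu
    rw [hg]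
    exact pointwise_id a a' t u ha ha' ht hu.1 hu.2
  rw [setIntegral_congr_fun measurableSet_Ioo hpt, MeasureTheory.integral_const_mul,
    integral_add (hint1.const_mul _) (hint2.const_mul _),
    MeasureTheory.integral_const_mul, MeasureTheory.integral_const_mul, hcov1, hcov2]
  unfold stableHalfDensity
  rw [rpow_m32 t ht]
  have hππ : Real.sqrt (2*π) * Real.sqrt (π/2) = π := by
    rw [← Real.sqrt_mul (by positivity), show (2*π)*(π/2) = π^2 by ring,
      Real.sqrt_sq Real.pi_pos.le]
  have hrt : 0 < Real.sqrt t := Real.sqrt_pos.2 ht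
  have hs2 : 0 < Real.sqrt (2*π) := by positivity
  rw [show -(a+a')^2/(2*t) = -((a+a')^2/(2*t)) by ring, mul_comm]
  congr 1
  have hπ2 : Real.sqrt π ^ 2 = π := Real.sq_sqrt Real.pi_pos.le
  field_simp
  rw [mul_comm π 2]
  linear_combination (a+a') * hππ
end
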